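/- arXiv:2112.01610 — 2 statements merged into one kernel-verified Lean document; each statement's English description precedes it below -/
import Mathlib

section
/- Let f : [0,1] → ℝ and suppose estimates g_i ∈ [0,1) satisfy d_w(g_i, f(i/n) mod 1) ≤ ε for all i ∈ {1,…,n}, where d_w is the wrap-around metric. Suppose furthermore |f(x) − f(y)| ≤ L|x−y|^γ for some γ ∈ (0,1] and 4ε + 2L n^{−γ} < 1. Define f̃_1 = g_1 and recursively f̃_i = f̃_{i−1} + d_i if |d_i| < 1/2, f̃_i = f̃_{i−1} + 1 + d_i if d_i < −1/2, f̃_i = f̃_{i−1} − 1 + d_i if d_i > 1/2, where d_i = g_i − g_{i−1}. Then there exists an integer q* such that |f̃_i + q* − f(i/n)| ≤ ε for all i ∈ {1,…,n}. -/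
open Real

private lemma int_eq_of_bounds (d : ℝ) (j k : ℤ)
    (hj : |d + (j:ℝ)| < 1/2) (hk : |d + (k:ℝ)| ≤ 1/2) : j = k := by
  have h1 : |((j - k : ℤ):ℝ)| < 1 := by
    push_cast
    rw [abs_lt]
    have hj' := abs_lt.mp hj
    have hk' := abs_le.mp hk
    constructor <;> linarith [hj'.1, hj'.2, hk'.1, hk'.2]
  have h2 : |j - k| < 1 := by exact_mod_cast h1
  rw [abs_lt] at h2
  omega

/-- Correctness of the sequential unwrapping procedure: if modulo-1 estimates `g i` are
`ε`-accurate in the wrap-around metric and `f` is Hölder with the gap condition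
`4ε + 2L n^{-γ} < 1`, then the unwrapped values `f̃ i` recover `f(i/n)` up to one global
integer shift with uniform accuracy `ε`. -/
theorem sequential_unwrapping_correct (n : ℕ) (hn : 1 ≤ n) (f : ℝ → ℝ)
    (g : ℕ → ℝ) (ε L γ : ℝ) (hε : 0 ≤ ε) (hL : 0 < L) (hγ : γ ∈ Set.Ioc (0:ℝ) 1)
    (hg_mem : ∀ i ∈ Finset.Icc 1 n, g i ∈ Set.Ico (0:ℝ) 1)
    (hg_close : ∀ i ∈ Finset.Icc 1 n,
      min |g i - Int.fract (f ((i : ℝ) / n))| (1 - |g i - Int.fract (f ((i : ℝ) / n))|) ≤ ε)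
    (hHolder : ∀ x ∈ Set.Icc (0:ℝ) 1, ∀ y ∈ Set.Icc (0:ℝ) 1,
      |f x - f y| ≤ L * |x - y| ^ γ)
    (hgap : 4 * ε + 2 * L * (n : ℝ) ^ (-γ) < 1)
    (ft : ℕ → ℝ) (hft1 : ft 1 = g 1)
    (hft : ∀ i, 2 ≤ i → i ≤ n →
      ft i = ft (i - 1) +
        (if |g i - g (i - 1)| < 1 / 2 then g i - g (i - 1)
         else if g i - g (i - 1) < -(1 / 2) then 1 + (g i - g (i - 1))
         else -1 + (g i - g (i - 1)))) :
    ∃ q : ℤ, ∀ i ∈ Finset.Icc 1 n, |ft i + q - f ((i : ℝ) / n)| ≤ ε := by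
  classical
  obtain ⟨hγ0, hγ1⟩ := hγ
  have hnpos : 0 < n := hn
  have hn0 : (0:ℝ) < n := by exact_mod_cast hnpos
  have hpow : ((1:ℝ)/n)^γ = (n:ℝ)^(-γ) := by
    rw [one_div, Real.rpow_neg hn0.le, ← Real.inv_rpow hn0.le]
  have hkey : 2*ε + L * ((1:ℝ)/n)^γ < 1/2 := by
    rw [hpow]; linarith
  -- Step 1: integer shifts
  have ht : ∀ i ∈ Finset.Icc 1 n, ∃ t : ℤ, |g i + (t:ℝ) - f ((i:ℝ)/n)| ≤ ε := by
    intro i hi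
    obtain ⟨hg0, hg1⟩ := hg_mem i hi
    have hclose := hg_close i hi
    set x := f ((i:ℝ)/n) with hx
    have hfr : Int.fract x = x - ⌊x⌋ := rfl
    have hfr0 : 0 ≤ Int.fract x := Int.fract_nonneg x
    have hfr1 : Int.fract x < 1 := Int.fract_lt_one x
    rcases min_le_iff.mp hclose with h | h
    · refine ⟨⌊x⌋, ?_⟩
      have e : g i + ((⌊x⌋:ℤ):ℝ) - x = g i - Int.fract x := by rw [hfr]; ring
      rw [e]; exact h
    · rcases le_or_gt 0 (g i - Int.fract x) with hd | hd
      · refine ⟨⌊x⌋ - 1, ?_⟩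
        have e : g i + ((⌊x⌋ - 1 : ℤ):ℝ) - x = (g i - Int.fract x) - 1 := by
          push_cast; rw [hfr]; ring
        rw [abs_of_nonneg hd] at h
        rw [e, abs_of_nonpos (by linarith)]
        linarith
      · refine ⟨⌊x⌋ + 1, ?_⟩
        have e : g i + ((⌊x⌋ + 1 : ℤ):ℝ) - x = (g i - Int.fract x) + 1 := by
          push_cast; rw [hfr]; ring
        rw [abs_of_neg hd] at h
        rw [e, abs_of_nonneg (by linarith)]
        linarith
  set t : ℕ → ℤ := fun i => if h : i ∈ Finset.Icc 1 n then (ht i h).choose else 0 with htdef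
  have htc : ∀ i ∈ Finset.Icc 1 n, |g i + (t i : ℝ) - f ((i:ℝ)/n)| ≤ ε := by
    intro i hi
    simp only [htdef, dif_pos hi]
    exact (ht i hi).choose_spec
  -- Hölder bound for consecutive points
  have hH : ∀ m : ℕ, 1 ≤ m → m + 1 ≤ n →
      |f ((↑(m+1):ℝ)/n) - f ((m:ℝ)/n)| ≤ L * ((1:ℝ)/n)^γ := by
    intro m hm1 hmn
    have hx1 : ((↑(m+1):ℝ)/n) ∈ Set.Icc (0:ℝ) 1 := by
      constructor
      · positivity
      · rw [div_le_one hn0]; exact_mod_cast hmn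
    have hx2 : ((m:ℝ)/n) ∈ Set.Icc (0:ℝ) 1 := by
      constructor
      · positivity
      · rw [div_le_one hn0]; exact_mod_cast le_trans (Nat.le_succ m) hmn
    have hb := hHolder _ hx1 _ hx2
    have e : (↑(m+1):ℝ)/↑n - (↑m:ℝ)/↑n = 1/↑n := by
      push_cast; field_simp; ring
    rw [e, abs_of_nonneg (div_nonneg zero_le_one hn0.le)] at hb
    exact hb
  -- Step 2: induction
  have hmain : ∀ i, 1 ≤ i → i ≤ n → ft i = g i + (t i : ℝ) - (t 1 : ℝ) := by
    intro i hi
    induction i, hi using Nat.le_induction with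
    | base => intro _; rw [hft1]; ring
    | succ m hm ih =>
      intro hmn
      have hmn' : m ≤ n := le_trans (Nat.le_succ m) hmn
      have ihm := ih hmn'
      have hmem_m : m ∈ Finset.Icc 1 n := Finset.mem_Icc.mpr ⟨hm, hmn'⟩
      have hmem_m1 : m + 1 ∈ Finset.Icc 1 n := Finset.mem_Icc.mpr ⟨by omega, hmn⟩
      have hA := htc (m+1) hmem_m1
      have hB := htc m hmem_m
      have hC := hH m hm hmn
      obtain ⟨hgm0, hgm1⟩ := hg_mem m hmem_m
      obtain ⟨hgm10, hgm11⟩ := hg_mem (m+1) hmem_m1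
      have hrec := hft (m+1) (by omega) hmn
      simp only [Nat.add_sub_cancel] at hrec
      set d : ℝ := g (m+1) - g m with hd
      set j : ℤ := t (m+1) - t m with hjdef
      have hj : |d + (j:ℝ)| < 1/2 := by
        set A := g (m+1) + (t (m+1) : ℝ) - f ((↑(m+1):ℝ)/n) with hA'
        set B := g m + (t m : ℝ) - f ((m:ℝ)/n) with hB'
        set C := f ((↑(m+1):ℝ)/n) - f ((m:ℝ)/n) with hC'
        have e : d + (j:ℝ) = A - B + C := by
          rw [hA', hB', hC', hd, hjdef]; push_cast; ring
        have t1 : |A - B + C| ≤ |A - B| + |C| := abs_add_le _ _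
        have t2 : |A - B| ≤ |A| + |B| := abs_sub _ _
        rw [e]
        linarith
      split_ifs at hrec with h1 h2
      · -- |d| < 1/2, k = 0
        have hk : |d + ((0:ℤ):ℝ)| ≤ 1/2 := by push_cast; rw [add_zero]; exact le_of_lt h1
        have hjk := int_eq_of_bounds d j 0 hj hk
        rw [hrec, ihm]
        have : (j:ℝ) = 0 := by exact_mod_cast congrArg (Int.cast : ℤ → ℝ) hjk
        rw [hjdef] at this
        push_cast at this
        rw [hd]
        linarith
      · -- d < -1/2, k = 1
        have hk : |d + ((1:ℤ):ℝ)| ≤ 1/2 := by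
          push_cast
          rw [abs_of_nonneg (by rw [hd]; linarith)]
          rw [hd]; linarith
        have hjk := int_eq_of_bounds d j 1 hj hk
        rw [hrec, ihm]
        have : (j:ℝ) = 1 := by exact_mod_cast congrArg (Int.cast : ℤ → ℝ) hjk
        rw [hjdef] at this
        push_cast at this
        rw [hd]
        linarith
      · -- d ≥ 1/2, k = -1
        have hd12 : 1/2 ≤ d := by
          have h1' : 1/2 ≤ |d| := le_of_not_gt h1
          have h2' : -(1/2) ≤ d := le_of_not_gt h2
          rcases abs_cases d with ⟨he, _⟩ | ⟨he, _⟩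
          · linarith
          · have hdm : d = -(1/2) := by linarith
            exfalso
            have hjl := abs_lt.mp hj
            rw [hdm] at hjl
            have hj0 : (0:ℤ) < j := by
              have : (0:ℝ) < (j:ℝ) := by linarith [hjl.1]
              exact_mod_cast this
            have hj1 : j < 1 := by
              have : (j:ℝ) < 1 := by linarith [hjl.2]
              exact_mod_cast this
            omega
        have hk : |d + ((-1:ℤ):ℝ)| ≤ 1/2 := by
          push_cast
          rw [abs_of_nonpos (by rw [hd]; linarith)]
          rw [hd]; linarith
        have hjk := int_eq_of_bounds d j (-1) hj hk
        rw [hrec, ihm]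
        have : (j:ℝ) = -1 := by exact_mod_cast congrArg (Int.cast : ℤ → ℝ) hjk
        rw [hjdef] at this
        push_cast at this
        rw [hd]
        linarith
  -- Step 3: conclude with q = t 1
  refine ⟨t 1, ?_⟩
  intro i hi
  obtain ⟨hi1, hi2⟩ := Finset.mem_Icc.mp hi
  rw [hmain i hi1 hi2]
  have e : g i + (t i:ℝ) - (t 1:ℝ) + (t 1:ℝ) - f ((i:ℝ)/n) = g i + (t i:ℝ) - f ((i:ℝ)/n) := by
    ring
  rw [e]
  exact htc i hi
end

section
/- Let K : ℝ → ℝ be a kernel satisfying K(u) ≥ K_min·1_{|u|≤Δ} for all u ∈ ℝ with K_min, Δ > 0, and for x ∈ [0,1], b > 0, n ∈ ℕ define B_{nx} = (1/(nb)) Σ_{i=1}^n U((x_i−x)/b) U((x_i−x)/b)^T K((x_i−x)/b) where U(u) = (1, u, u²/2!, …, u^l/l!)^T and x_i = i/n. If b_n → 0 and n b_n → ∞, then there exist λ₀ > 0 and n₀ such that λ_min(B_{nx}) ≥ λ₀ for all n ≥ n₀ and all x ∈ [0,1]. -/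
open Real Matrix

namespace DesignEV

noncomputable def pp (l : ℕ) (v : Fin (l+1) → ℝ) (u : ℝ) : ℝ :=
  ∑ k : Fin (l+1), u ^ (k:ℕ) / (Nat.factorial k) * v k

noncomputable def Sq (l : ℕ) (v : Fin (l+1) → ℝ) : ℝ := ∑ k : Fin (l+1), (v k)^2

lemma Sq_nonneg (l : ℕ) (v : Fin (l+1) → ℝ) : 0 ≤ Sq l v :=
  Finset.sum_nonneg fun _ _ => sq_nonneg _

lemma Sq_eq_dot (l : ℕ) (v : Fin (l+1) → ℝ) : Sq l v = v ⬝ᵥ v := by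
  simp [Sq, dotProduct, sq]

lemma pp_cont (l : ℕ) (v : Fin (l+1) → ℝ) : Continuous (pp l v) := by
  apply continuous_finset_sum
  intro k _
  exact ((continuous_pow _).div_const _).mul continuous_const

lemma pp_sq_cont (l : ℕ) (v : Fin (l+1) → ℝ) : Continuous fun u => (pp l v u)^2 :=
  (pp_cont l v).pow 2

noncomputable def Rc (l : ℕ) (D : ℝ) : ℝ :=
  ∑ k : Fin (l+1), (D ^ (k:ℕ) / (Nat.factorial k : ℝ))^2

noncomputable def R1c (l : ℕ) (D : ℝ) : ℝ :=
  ∑ k : Fin (l+1), ((k:ℝ) * D ^ (k:ℕ) / (Nat.factorial k : ℝ))^2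

noncomputable def CLc (l : ℕ) (D : ℝ) : ℝ := 2 * Real.sqrt (R1c l D * Rc l D)

lemma Rc_nonneg (l : ℕ) (D : ℝ) : 0 ≤ Rc l D := Finset.sum_nonneg fun _ _ => sq_nonneg _
lemma R1c_nonneg (l : ℕ) (D : ℝ) : 0 ≤ R1c l D := Finset.sum_nonneg fun _ _ => sq_nonneg _
lemma CLc_nonneg (l : ℕ) (D : ℝ) : 0 ≤ CLc l D := by
  unfold CLc; positivity

lemma powdiff (c : ℝ) (hc : 1 ≤ c) (k : ℕ) :
    ∀ t s : ℝ, |t| ≤ c → |s| ≤ c → |t ^ k - s ^ k| ≤ (k:ℝ) * c ^ k * |t - s| := by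
  induction k with
  | zero => intro t s _ _; simp
  | succ k ih =>
    intro t s ht hs
    have hc0 : (0:ℝ) ≤ c := le_trans zero_le_one hc
    have h1 : t ^ (k+1) - s ^ (k+1) = t ^ k * (t - s) + s * (t ^ k - s ^ k) := by ring
    have h2 : |t ^ (k+1) - s ^ (k+1)| ≤ |t|^k * |t - s| + |s| * |t^k - s^k| := by
      rw [h1]
      refine (abs_add_le _ _).trans ?_
      rw [abs_mul, abs_mul, abs_pow]
    have h3 : |t|^k ≤ c^k := pow_le_pow_left₀ (abs_nonneg t) ht k
    have h4 : |s| * |t^k - s^k| ≤ c * ((k:ℝ) * c^k * |t-s|) :=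
      mul_le_mul hs (ih t s ht hs) (abs_nonneg _) hc0
    have h5 : c^k ≤ c^(k+1) := by
      calc c^k = 1 * c^k := by ring
      _ ≤ c * c^k := by gcongr
      _ = c^(k+1) := by ring
    have h6 : (0:ℝ) ≤ |t - s| := abs_nonneg _
    have h7 : |t|^k * |t-s| ≤ c^(k+1) * |t-s| :=
      mul_le_mul_of_nonneg_right (h3.trans h5) h6
    push_cast
    have h8 : c * ((k:ℝ) * c^k * |t-s|) = (k:ℝ) * c^(k+1) * |t-s| := by ring
    rw [h8] at h4
    nlinarith [h2, h7, h4]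

lemma pp_sq_le (l : ℕ) (D : ℝ) (hD : 1 ≤ D) (v : Fin (l+1) → ℝ) (u : ℝ) (hu : |u| ≤ D) :
    (pp l v u)^2 ≤ Rc l D * Sq l v := by
  have h1 := Finset.sum_mul_sq_le_sq_mul_sq Finset.univ
    (fun k : Fin (l+1) => u ^ (k:ℕ) / (Nat.factorial k : ℝ)) v
  refine le_trans h1 ?_
  apply mul_le_mul_of_nonneg_right _ (Sq_nonneg l v)
  apply Finset.sum_le_sum
  intro k _
  have hk : |u ^ (k:ℕ) / (Nat.factorial k : ℝ)| ≤ D ^ (k:ℕ) / (Nat.factorial k : ℝ) := by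
    rw [abs_div, abs_pow, Nat.abs_cast]
    gcongr
  calc (u ^ (k:ℕ) / (Nat.factorial k : ℝ))^2
      = |u ^ (k:ℕ) / (Nat.factorial k : ℝ)|^2 := (sq_abs _).symm
    _ ≤ (D ^ (k:ℕ) / (Nat.factorial k : ℝ))^2 := by
        apply pow_le_pow_left₀ (abs_nonneg _) hk

lemma pp_diff_sq_le (l : ℕ) (D : ℝ) (hD : 1 ≤ D) (v : Fin (l+1) → ℝ) (t s : ℝ)
    (ht : |t| ≤ D) (hs : |s| ≤ D) :
    (pp l v t - pp l v s)^2 ≤ R1c l D * (t - s)^2 * Sq l v := by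
  have hdiff : pp l v t - pp l v s
      = ∑ k : Fin (l+1), (t ^ (k:ℕ) - s ^ (k:ℕ)) / (Nat.factorial k : ℝ) * v k := by
    rw [pp, pp, ← Finset.sum_sub_distrib]
    apply Finset.sum_congr rfl
    intro k _; ring
  rw [hdiff]
  have h1 := Finset.sum_mul_sq_le_sq_mul_sq Finset.univ
    (fun k : Fin (l+1) => (t ^ (k:ℕ) - s ^ (k:ℕ)) / (Nat.factorial k : ℝ)) v
  refine le_trans h1 ?_
  apply mul_le_mul_of_nonneg_right _ (Sq_nonneg l v)
  have h2 : ∀ k : Fin (l+1), ((t ^ (k:ℕ) - s ^ (k:ℕ)) / (Nat.factorial k : ℝ))^2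
      ≤ ((k:ℝ) * D ^ (k:ℕ) / (Nat.factorial k : ℝ))^2 * (t-s)^2 := by
    intro k
    have hb := powdiff D hD (k:ℕ) t s ht hs
    have hfac : (0:ℝ) < (Nat.factorial k : ℝ) := by
      exact_mod_cast Nat.factorial_pos _
    have habs : |(t ^ (k:ℕ) - s ^ (k:ℕ)) / (Nat.factorial k : ℝ)|
        ≤ (k:ℝ) * D ^ (k:ℕ) / (Nat.factorial k : ℝ) * |t - s| := by
      rw [abs_div, abs_of_pos hfac, div_mul_eq_mul_div]
      gcongr
    calc ((t ^ (k:ℕ) - s ^ (k:ℕ)) / (Nat.factorial k : ℝ))^2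
        = |(t ^ (k:ℕ) - s ^ (k:ℕ)) / (Nat.factorial k : ℝ)|^2 := (sq_abs _).symm
      _ ≤ ((k:ℝ) * D ^ (k:ℕ) / (Nat.factorial k : ℝ) * |t - s|)^2 := by
          apply pow_le_pow_left₀ (abs_nonneg _) habs
      _ = ((k:ℝ) * D ^ (k:ℕ) / (Nat.factorial k : ℝ))^2 * (t-s)^2 := by
          rw [mul_pow, sq_abs]
  calc (∑ k : Fin (l+1), ((t ^ (k:ℕ) - s ^ (k:ℕ)) / (Nat.factorial k : ℝ))^2)
      ≤ ∑ k : Fin (l+1), ((k:ℝ) * D ^ (k:ℕ) / (Nat.factorial k : ℝ))^2 * (t-s)^2 :=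
        Finset.sum_le_sum fun k _ => h2 k
    _ = R1c l D * (t-s)^2 := by rw [← Finset.sum_mul, R1c]

lemma pp_sq_shift (l : ℕ) (D : ℝ) (hD : 1 ≤ D) (v : Fin (l+1) → ℝ) (t s : ℝ)
    (ht : |t| ≤ D) (hs : |s| ≤ D) :
    (pp l v t)^2 ≤ (pp l v s)^2 + CLc l D * Sq l v * |t - s| := by
  set X := pp l v t with hX
  set Y := pp l v s with hY
  have hd := pp_diff_sq_le l D hD v t s ht hs
  have hXb := pp_sq_le l D hD v t ht
  have hYb := pp_sq_le l D hD v s hs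
  have hW : X^2 - Y^2 ≤ |X - Y| * |X + Y| := by
    calc X^2 - Y^2 = (X - Y) * (X + Y) := by ring
      _ ≤ |(X - Y) * (X + Y)| := le_abs_self _
      _ = |X - Y| * |X + Y| := abs_mul _ _
  have hS0 := Sq_nonneg l v
  have hCL0 := CLc_nonneg l D
  have h1 : (|X - Y| * |X + Y|)^2 ≤ (CLc l D * Sq l v * |t - s|)^2 := by
    have e1 : (|X - Y| * |X + Y|)^2 = (X - Y)^2 * (X + Y)^2 := by
      rw [mul_pow, sq_abs, sq_abs]
    have e2 : (X + Y)^2 ≤ 2 * (X^2 + Y^2) := by nlinarith [sq_nonneg (X - Y)]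
    have e3 : (X + Y)^2 ≤ 4 * (Rc l D * Sq l v) := by nlinarith
    have e4 : (X - Y)^2 * (X + Y)^2 ≤ (R1c l D * (t-s)^2 * Sq l v) * (4 * (Rc l D * Sq l v)) := by
      apply mul_le_mul hd e3 (sq_nonneg _)
      exact mul_nonneg (mul_nonneg (R1c_nonneg l D) (sq_nonneg _)) (Sq_nonneg l v)
    have e5 : (CLc l D * Sq l v * |t - s|)^2 = 4 * (R1c l D * Rc l D) * (Sq l v)^2 * (t-s)^2 := by
      unfold CLc
      rw [mul_pow, mul_pow, mul_pow, sq_abs]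
      rw [Real.sq_sqrt (mul_nonneg (R1c_nonneg l D) (Rc_nonneg l D))]
      ring
    rw [e1, e5]
    nlinarith [e4]
  have h2 : |X - Y| * |X + Y| ≤ CLc l D * Sq l v * |t - s| := by
    have hW0 : 0 ≤ |X - Y| * |X + Y| := mul_nonneg (abs_nonneg _) (abs_nonneg _)
    have hC0 : 0 ≤ CLc l D * Sq l v * |t - s| := by positivity
    nlinarith [h1, hW0, hC0]
  linarith [hW, h2]

lemma cell_bound (l : ℕ) (D : ℝ) (hD : 1 ≤ D) (v : Fin (l+1) → ℝ) (h t : ℝ)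
    (hh : 0 ≤ h) (h1 : -D ≤ t - h) (h2 : t ≤ D) :
    ∫ u in (t-h)..t, (pp l v u)^2 ≤ h * ((pp l v t)^2 + CLc l D * Sq l v * h) := by
  have hcont := pp_sq_cont l v
  have hpt : ∀ u ∈ Set.Icc (t-h) t, (pp l v u)^2 ≤ (pp l v t)^2 + CLc l D * Sq l v * h := by
    intro u hu
    obtain ⟨hu1, hu2⟩ := hu
    have hut : |u| ≤ D := abs_le.mpr ⟨by linarith, by linarith⟩
    have htt : |t| ≤ D := abs_le.mpr ⟨by linarith, h2⟩
    have := pp_sq_shift l D hD v u t hut htt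
    have habs : |u - t| ≤ h := abs_le.mpr ⟨by linarith, by linarith⟩
    have hmul : CLc l D * Sq l v * |u - t| ≤ CLc l D * Sq l v * h :=
      mul_le_mul_of_nonneg_left habs (mul_nonneg (CLc_nonneg l D) (Sq_nonneg l v))
    linarith
  calc ∫ u in (t-h)..t, (pp l v u)^2
      ≤ ∫ _u in (t-h)..t, ((pp l v t)^2 + CLc l D * Sq l v * h) := by
        apply intervalIntegral.integral_mono_on (by linarith)
          (hcont.intervalIntegrable _ _) intervalIntegrable_const hpt
    _ = h * ((pp l v t)^2 + CLc l D * Sq l v * h) := by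
        rw [intervalIntegral.integral_const, smul_eq_mul]
        ring_nf

noncomputable def GG (l : ℕ) (a d : ℝ) (v : Fin (l+1) → ℝ) : ℝ :=
  ∫ u in a..(a+d), (pp l v u)^2

lemma pp_sq_expand (l : ℕ) (v : Fin (l+1) → ℝ) (u : ℝ) :
    (pp l v u)^2 = ∑ j : Fin (l+1), ∑ k : Fin (l+1),
      v j * v k * (u ^ ((j:ℕ)+(k:ℕ)) / ((Nat.factorial j : ℝ) * (Nat.factorial k : ℝ))) := by
  rw [pp, sq, Finset.sum_mul_sum]
  apply Finset.sum_congr rfl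
  intro j _
  apply Finset.sum_congr rfl
  intro k _
  rw [pow_add]
  ring

set_option maxHeartbeats 1000000 in
lemma GG_rep (l : ℕ) (a d : ℝ) :
    ∀ v : Fin (l+1) → ℝ, GG l a d v = ∑ j : Fin (l+1), ∑ k : Fin (l+1),
      v j * v k * (∫ u in a..(a+d), u ^ ((j:ℕ)+(k:ℕ)) / ((Nat.factorial j : ℝ) * (Nat.factorial k : ℝ))) := by
  intro v
  have hint : ∀ (j k : Fin (l+1)), IntervalIntegrable
      (fun u : ℝ => v j * v k * (u ^ ((j:ℕ)+(k:ℕ)) / ((Nat.factorial j : ℝ) * (Nat.factorial k : ℝ)))) MeasureTheory.volume a (a+d) := by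
    intro j k
    apply Continuous.intervalIntegrable
    exact continuous_const.mul ((continuous_pow _).div_const _)
  rw [GG]
  have : (fun u : ℝ => (pp l v u)^2) = fun u => ∑ j : Fin (l+1), ∑ k : Fin (l+1),
      v j * v k * (u ^ ((j:ℕ)+(k:ℕ)) / ((Nat.factorial j : ℝ) * (Nat.factorial k : ℝ))) := by
    funext u; exact pp_sq_expand l v u
  rw [this]
  rw [intervalIntegral.integral_finset_sum]
  · apply Finset.sum_congr rfl
    intro j _
    rw [intervalIntegral.integral_finset_sum]
    · apply Finset.sum_congr rfl
      intro k _
      rw [intervalIntegral.integral_const_mul]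
    · intro k _; exact hint j k
  · intro j _
    apply Continuous.intervalIntegrable
    apply continuous_finset_sum
    intro k _
    exact continuous_const.mul ((continuous_pow _).div_const _)

lemma GG_cont (l : ℕ) (a d : ℝ) : Continuous fun v : Fin (l+1) → ℝ => GG l a d v := by
  have : (fun v : Fin (l+1) → ℝ => GG l a d v) = fun v => ∑ j : Fin (l+1), ∑ k : Fin (l+1),
      v j * v k * (∫ u in a..(a+d), u ^ ((j:ℕ)+(k:ℕ)) / ((Nat.factorial j : ℝ) * (Nat.factorial k : ℝ))) := by
    funext v; exact GG_rep l a d v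
  rw [this]
  apply continuous_finset_sum
  intro j _
  apply continuous_finset_sum
  intro k _
  exact ((continuous_apply j).mul (continuous_apply k)).mul continuous_const

lemma GG_smul (l : ℕ) (a d c : ℝ) (v : Fin (l+1) → ℝ) :
    GG l a d (c • v) = c^2 * GG l a d v := by
  rw [GG_rep, GG_rep, Finset.mul_sum]
  apply Finset.sum_congr rfl
  intro j _
  rw [Finset.mul_sum]
  apply Finset.sum_congr rfl
  intro k _
  simp only [Pi.smul_apply, smul_eq_mul]
  ring

lemma GG_pos (l : ℕ) (a d : ℝ) (hd : 0 < d) (v : Fin (l+1) → ℝ) (hv : v ≠ 0) :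
    0 < GG l a d v := by
  classical
  by_cases hall : ∀ u ∈ Set.Icc a (a+d), pp l v u = 0
  · exfalso
    set P : Polynomial ℝ :=
      ∑ k : Fin (l+1), Polynomial.C (v k / (Nat.factorial k : ℝ)) * Polynomial.X ^ (k:ℕ) with hP
    have hev : ∀ u : ℝ, P.eval u = pp l v u := by
      intro u
      rw [hP, Polynomial.eval_finset_sum, pp]
      apply Finset.sum_congr rfl
      intro k _
      simp [Polynomial.eval_mul, Polynomial.eval_pow]
      ring
    have hroots : Set.Infinite {u : ℝ | P.IsRoot u} := by
      apply Set.Infinite.mono _ (Set.Icc_infinite (by linarith : a < a + d))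
      intro u hu
      simp only [Set.mem_setOf_eq, Polynomial.IsRoot]
      rw [hev]
      exact hall u hu
    have hP0 : P = 0 := Polynomial.eq_zero_of_infinite_isRoot P hroots
    apply hv
    funext j
    have hcoeff : P.coeff (j:ℕ) = v j / (Nat.factorial j : ℝ) := by
      rw [hP, Polynomial.finset_sum_coeff]
      rw [Finset.sum_eq_single j]
      · simp [Polynomial.coeff_C_mul, Polynomial.coeff_X_pow]
      · intro k _ hkj
        simp only [Polynomial.coeff_C_mul, Polynomial.coeff_X_pow]
        rw [if_neg]
        · ring
        · intro hc
          exact hkj (Fin.ext hc.symm)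
      · intro hj; exact absurd (Finset.mem_univ j) hj
    rw [hP0] at hcoeff
    simp only [Polynomial.coeff_zero] at hcoeff
    have hfac : (Nat.factorial j : ℝ) ≠ 0 := by
      exact_mod_cast (Nat.factorial_pos (j:ℕ)).ne'
    have : v j = 0 := by
      field_simp at hcoeff
      linarith [hcoeff]
    simp [this]
  · push_neg at hall
    obtain ⟨u, hu, hpu⟩ := hall
    apply intervalIntegral.integral_pos (by linarith : a < a + d)
      ((pp_sq_cont l v).continuousOn)
      (fun x _ => sq_nonneg _)
    refine ⟨u, hu, ?_⟩
    have : 0 < |pp l v u| := abs_pos.mpr hpu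
    calc (0:ℝ) < |pp l v u|^2 := pow_pos this 2
      _ = (pp l v u)^2 := sq_abs _

lemma Sq_smul (l : ℕ) (c : ℝ) (v : Fin (l+1) → ℝ) : Sq l (c • v) = c^2 * Sq l v := by
  simp [Sq, Finset.mul_sum, mul_pow]

lemma GG_nonneg (l : ℕ) (a d : ℝ) (hd : 0 ≤ d) (v : Fin (l+1) → ℝ) : 0 ≤ GG l a d v :=
  intervalIntegral.integral_nonneg (by linarith) (fun u _ => sq_nonneg _)

lemma exists_eps (l : ℕ) (d : ℝ) (hd : 0 < d) :
    ∃ ε > 0, ∀ v : Fin (l+1) → ℝ,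
      ε * Sq l v ≤ GG l 0 d v ∧ ε * Sq l v ≤ GG l (-d) d v := by
  classical
  set Sph : Set (Fin (l+1) → ℝ) := {v | Sq l v = 1} with hSph
  have hSqcont : Continuous (Sq l) :=
    continuous_finset_sum _ fun k _ => (continuous_apply k).pow 2
  have hclosed : IsClosed Sph := isClosed_eq hSqcont continuous_const
  have hbdd : Bornology.IsBounded Sph := by
    apply (Metric.isBounded_closedBall (x := (0 : Fin (l+1) → ℝ)) (r := 1)).subset
    intro v hv
    rw [Metric.mem_closedBall, dist_zero_right]
    rw [pi_norm_le_iff_of_nonneg zero_le_one]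
    intro i
    rw [Real.norm_eq_abs]
    have h1 : (v i)^2 ≤ Sq l v :=
      Finset.single_le_sum (fun k _ => sq_nonneg (v k)) (Finset.mem_univ i)
    have h2 : (v i)^2 ≤ 1 := by rw [hv] at h1; exact h1
    exact (sq_le_one_iff_abs_le_one _).mp h2
  have hcpt : IsCompact Sph := Metric.isCompact_of_isClosed_isBounded hclosed hbdd
  have hne : Sph.Nonempty := by
    refine ⟨fun k => if k = 0 then (1:ℝ) else 0, ?_⟩
    have : ∀ k : Fin (l+1), ((if k = 0 then (1:ℝ) else 0))^2 = if k = 0 then (1:ℝ) else 0 := by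
      intro k; split <;> norm_num
    simp only [hSph, Set.mem_setOf_eq, Sq, this]
    simp
  set F : (Fin (l+1) → ℝ) → ℝ := fun v => min (GG l 0 d v) (GG l (-d) d v) with hF
  have hFcont : ContinuousOn F Sph :=
    ((GG_cont l 0 d).min (GG_cont l (-d) d)).continuousOn
  obtain ⟨v0, hv0mem, hmin⟩ := hcpt.exists_isMinOn hne hFcont
  have hv0ne : v0 ≠ 0 := by
    intro h0
    rw [h0] at hv0mem
    simp only [hSph, Set.mem_setOf_eq, Sq] at hv0mem
    simp at hv0mem
  have heps : 0 < F v0 :=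
    lt_min (GG_pos l 0 d hd v0 hv0ne) (GG_pos l (-d) d hd v0 hv0ne)
  refine ⟨F v0, heps, ?_⟩
  intro v
  by_cases hv : v = 0
  · subst hv
    have : Sq l (0 : Fin (l+1) → ℝ) = 0 := by simp [Sq]
    rw [this, mul_zero]
    exact ⟨GG_nonneg l 0 d hd.le _, GG_nonneg l (-d) d hd.le _⟩
  · obtain ⟨k, hk⟩ := Function.ne_iff.mp hv
    have hk' : (0:ℝ) < (v k)^2 := by
      have := abs_pos.mpr hk
      calc (0:ℝ) < |v k|^2 := pow_pos this 2
        _ = (v k)^2 := sq_abs _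
    have hSqpos : 0 < Sq l v :=
      lt_of_lt_of_le hk' (Finset.single_le_sum (fun j _ => sq_nonneg (v j)) (Finset.mem_univ k))
    set s := Real.sqrt (Sq l v) with hs_def
    have hs : 0 < s := Real.sqrt_pos.mpr hSqpos
    have hs2 : s^2 = Sq l v := Real.sq_sqrt hSqpos.le
    set v' := s⁻¹ • v with hv'_def
    have hv'mem : v' ∈ Sph := by
      simp only [hSph, Set.mem_setOf_eq, hv'_def, Sq_smul]
      rw [← hs2]
      field_simp
    have hsv : s • v' = v := by
      rw [hv'_def, smul_smul, mul_inv_cancel₀ hs.ne', one_smul]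
    have hmin' : F v0 ≤ F v' := hmin hv'mem
    have h0 : GG l 0 d v = s^2 * GG l 0 d v' := by rw [← hsv, GG_smul]
    have h1 : GG l (-d) d v = s^2 * GG l (-d) d v' := by rw [← hsv, GG_smul]
    constructor
    · rw [h0, ← hs2]
      have : F v0 ≤ GG l 0 d v' := hmin'.trans (min_le_left _ _)
      nlinarith [sq_nonneg s]
    · rw [h1, ← hs2]
      have : F v0 ≤ GG l (-d) d v' := hmin'.trans (min_le_right _ _)
      nlinarith [sq_nonneg s]

set_option maxHeartbeats 1600000 in
lemma riemann (l : ℕ) (D d : ℝ) (hD : 1 ≤ D) (hd : 0 < d)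
    (a x bb : ℝ) (n : ℕ) (hn : 1 ≤ n) (hb : 0 < bb)
    (hhd : 1/((n:ℝ)*bb) ≤ d)
    (hA0 : 0 ≤ (n:ℝ)*(x + a*bb))
    (haD : a + d ≤ D) (haD' : -D ≤ a - d)
    (v : Fin (l+1) → ℝ) :
    GG l a d v - 1/((n:ℝ)*bb) * ((Rc l D + 2*d*CLc l D) * Sq l v) ≤
      1/((n:ℝ)*bb) * ∑ i ∈ Finset.Ioc (Nat.floor ((n:ℝ)*(x + a*bb)))
          (Nat.floor ((n:ℝ)*(x + (a+d)*bb))),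
        (pp l v (((i:ℝ)/(n:ℝ) - x)/bb))^2 := by
  have hn0 : (0:ℝ) < n := by exact_mod_cast hn
  have hnR : ((n:ℝ)) ≠ 0 := hn0.ne'
  have hbne : bb ≠ 0 := hb.ne'
  have hnb : 0 < (n:ℝ)*bb := mul_pos hn0 hb
  set h : ℝ := 1/((n:ℝ)*bb) with hh_def
  have hh : 0 < h := by rw [hh_def]; positivity
  set A : ℝ := (n:ℝ)*(x + a*bb) with hA_def
  set m : ℝ := (n:ℝ)*(d*bb) with hm_def
  have hm0 : 0 < m := by rw [hm_def]; positivity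
  have hAm : (n:ℝ)*(x + (a+d)*bb) = A + m := by rw [hA_def, hm_def]; ring
  have hAh : A * h = x/bb + a := by
    rw [hA_def, hh_def]; field_simp
  have hmh : m * h = d := by
    rw [hm_def, hh_def]; field_simp
  rw [hAm]
  set i0 : ℕ := Nat.floor A with hi0_def
  set i1 : ℕ := Nat.floor (A + m) with hi1_def
  have hi0le : (i0:ℝ) ≤ A := Nat.floor_le hA0
  have hi0gt : A - 1 < (i0:ℝ) := Nat.sub_one_lt_floor A
  have hi1le : (i1:ℝ) ≤ A + m := Nat.floor_le (by linarith)
  have hi1gt : A + m - 1 < (i1:ℝ) := Nat.sub_one_lt_floor _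
  have hi01 : i0 ≤ i1 := Nat.floor_mono (by linarith)
  set N : ℕ := i1 - i0 with hN_def
  have hNcast : (N:ℝ) = (i1:ℝ) - (i0:ℝ) := by
    rw [hN_def, Nat.cast_sub hi01]
  set f : ℕ → ℝ := fun k => ((i0 + k : ℕ):ℝ) * h - x/bb with hf_def
  have hfk : ∀ k : ℕ, f k = ((i0:ℝ) + (k:ℝ)) * h - x/bb := by
    intro k; rw [hf_def]; push_cast; ring
  have hcellshift : ∀ k : ℕ, f (k+1) - h = f k := by
    intro k; rw [hfk, hfk]; push_cast; ring
  have hu : ∀ i : ℕ, ((i:ℝ)/(n:ℝ) - x)/bb = (i:ℝ)*h - x/bb := by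
    intro i; rw [hh_def]; field_simp
  have hf0le : f 0 ≤ a := by
    rw [hfk]
    have := mul_le_mul_of_nonneg_right hi0le hh.le
    push_cast
    nlinarith [hAh]
  have hflow : ∀ k : ℕ, a - h ≤ f k := by
    intro k
    rw [hfk]
    have h1 : (A - 1) * h ≤ (i0:ℝ) * h := mul_le_mul_of_nonneg_right hi0gt.le hh.le
    have h2 : 0 ≤ (k:ℝ) * h := mul_nonneg (Nat.cast_nonneg k) hh.le
    nlinarith [hAh]
  have hfup : ∀ k : ℕ, k ≤ N → f k ≤ a + d := by
    intro k hk
    rw [hfk]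
    have h1 : (i0:ℝ) + (k:ℝ) ≤ (i1:ℝ) := by
      have : (k:ℝ) ≤ (N:ℝ) := by exact_mod_cast hk
      rw [hNcast] at this; linarith
    have h2 : ((i0:ℝ) + (k:ℝ)) * h ≤ (i1:ℝ) * h := mul_le_mul_of_nonneg_right h1 hh.le
    have h3 : (i1:ℝ) * h ≤ (A + m) * h := mul_le_mul_of_nonneg_right hi1le hh.le
    nlinarith [hAh, hmh]
  have hfN : a + d - h ≤ f N := by
    rw [hfk]
    have h1 : (A + m - 1) * h ≤ (i1:ℝ) * h := mul_le_mul_of_nonneg_right hi1gt.le hh.le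
    have h2 : (i0:ℝ) + (N:ℝ) = (i1:ℝ) := by rw [hNcast]; ring
    rw [h2]
    nlinarith [hAh, hmh]
  have hI : ∀ (p q : ℝ), IntervalIntegrable (fun u => (pp l v u)^2) MeasureTheory.volume p q :=
    fun p q => (pp_sq_cont l v).intervalIntegrable p q
  -- sum of cell integrals equals the whole integral
  have hsumint : ∑ k ∈ Finset.range N, ∫ u in (f k)..(f (k+1)), (pp l v u)^2
      = ∫ u in (f 0)..(f N), (pp l v u)^2 :=
    intervalIntegral.sum_integral_adjacent_intervals (fun k _ => hI _ _)
  -- the whole integral dominates the integral over [a, a+d-h]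
  have hBle : (∫ u in a..(a+d-h), (pp l v u)^2) ≤ ∫ u in (f 0)..(f N), (pp l v u)^2 := by
    apply intervalIntegral.integral_mono_interval hf0le (by linarith) hfN
      (MeasureTheory.ae_of_all _ (fun u => sq_nonneg _)) (hI _ _)
  -- split GG
  have hsplit : GG l a d v = (∫ u in a..(a+d-h), (pp l v u)^2)
      + ∫ u in (a+d-h)..(a+d), (pp l v u)^2 := by
    rw [GG, intervalIntegral.integral_add_adjacent_intervals (hI _ _) (hI _ _)]
  have hedge : (∫ u in (a+d-h)..(a+d), (pp l v u)^2) ≤ h * (Rc l D * Sq l v) := by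
    calc (∫ u in (a+d-h)..(a+d), (pp l v u)^2)
        ≤ ∫ _u in (a+d-h)..(a+d), (Rc l D * Sq l v) := by
          apply intervalIntegral.integral_mono_on (by linarith) (hI _ _)
            intervalIntegrable_const
          intro u hu
          obtain ⟨hu1, hu2⟩ := hu
          exact pp_sq_le l D hD v u (abs_le.mpr ⟨by linarith, by linarith⟩)
      _ = h * (Rc l D * Sq l v) := by
          rw [intervalIntegral.integral_const, smul_eq_mul]; ring_nf
  -- cell bounds
  have hcellb : ∀ k ∈ Finset.range N, (∫ u in (f k)..(f (k+1)), (pp l v u)^2)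
      ≤ h * ((pp l v (f (k+1)))^2 + CLc l D * Sq l v * h) := by
    intro k hk
    have hkN : k + 1 ≤ N := Finset.mem_range.mp hk
    have ht1 : f (k+1) ≤ D := (hfup (k+1) hkN).trans (by linarith)
    have ht2 : -D ≤ f (k+1) - h := by
      rw [hcellshift k]
      have := hflow k
      linarith
    have hc := cell_bound l D hD v h (f (k+1)) hh.le ht2 ht1
    rw [hcellshift k] at hc
    exact hc
  have hsum2 : (∫ u in (f 0)..(f N), (pp l v u)^2)
      ≤ h * (∑ k ∈ Finset.range N, (pp l v (f (k+1)))^2)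
        + (N:ℝ) * (h * (CLc l D * Sq l v * h)) := by
    rw [← hsumint]
    calc ∑ k ∈ Finset.range N, ∫ u in (f k)..(f (k+1)), (pp l v u)^2
        ≤ ∑ k ∈ Finset.range N, h * ((pp l v (f (k+1)))^2 + CLc l D * Sq l v * h) :=
          Finset.sum_le_sum hcellb
      _ = h * (∑ k ∈ Finset.range N, (pp l v (f (k+1)))^2)
          + (N:ℝ) * (h * (CLc l D * Sq l v * h)) := by
          simp only [mul_add, Finset.sum_add_distrib, Finset.sum_const, Finset.card_range,
            nsmul_eq_mul, Finset.mul_sum]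
  -- reindex
  have hreindex : ∑ k ∈ Finset.range N, (pp l v (f (k+1)))^2
      = ∑ i ∈ Finset.Ioc i0 i1, (pp l v ((i:ℝ)*h - x/bb))^2 := by
    have hIoc : Finset.Ioc i0 i1 = Finset.Ico (i0+1) (i1+1) := by
      ext j; simp only [Finset.mem_Ioc, Finset.mem_Ico]; omega
    rw [hIoc, Finset.sum_Ico_eq_sum_range]
    rw [show i1 + 1 - (i0 + 1) = N from by omega]
    apply Finset.sum_congr rfl
    intro k _
    rw [show i0 + 1 + k = i0 + (k+1) from by omega]
  -- cardinality bound
  have hNh : (N:ℝ) * h ≤ 2*d := by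
    have h1 : (N:ℝ) ≤ m + 1 := by rw [hNcast]; linarith
    calc (N:ℝ)*h ≤ (m+1)*h := mul_le_mul_of_nonneg_right h1 hh.le
      _ = m*h + h := by ring
      _ = d + h := by rw [hmh]
      _ ≤ 2*d := by linarith
  have hterm : (N:ℝ) * (h * (CLc l D * Sq l v * h)) ≤ 2*d*(CLc l D * Sq l v * h) := by
    have hnn : 0 ≤ CLc l D * Sq l v * h :=
      mul_nonneg (mul_nonneg (CLc_nonneg l D) (Sq_nonneg l v)) hh.le
    have := mul_le_mul_of_nonneg_right hNh hnn
    nlinarith [this]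
  -- convert the goal sum
  have hgsum : ∑ i ∈ Finset.Ioc i0 i1, (pp l v (((i:ℝ)/(n:ℝ) - x)/bb))^2
      = ∑ i ∈ Finset.Ioc i0 i1, (pp l v ((i:ℝ)*h - x/bb))^2 :=
    Finset.sum_congr rfl (fun i _ => by rw [hu i])
  rw [hgsum, ← hreindex]
  nlinarith [hsplit, hedge, hBle, hsum2, hterm, Sq_nonneg l v, hh.le]

lemma dot_pp (l : ℕ) (v : Fin (l+1) → ℝ) (u : ℝ) :
    (fun k : Fin (l+1) => u^(k:ℕ)/(Nat.factorial k : ℝ)) ⬝ᵥ v = pp l v u := by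
  simp [dotProduct, pp]

lemma quad_term (l : ℕ) (w v : Fin (l+1) → ℝ) :
    v ⬝ᵥ (vecMulVec w w).mulVec v = (w ⬝ᵥ v)^2 := by
  have h1 : (vecMulVec w w).mulVec v = fun j => w j * (w ⬝ᵥ v) := by
    funext j
    simp only [Matrix.mulVec, Matrix.vecMulVec_apply, dotProduct, Finset.mul_sum]
    apply Finset.sum_congr rfl
    intro k _
    ring
  rw [h1]
  show ∑ j : Fin (l+1), v j * (w j * (w ⬝ᵥ v)) = (w ⬝ᵥ v)^2
  calc ∑ j : Fin (l+1), v j * (w j * (w ⬝ᵥ v))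
      = (∑ j : Fin (l+1), w j * v j) * (w ⬝ᵥ v) := by
        rw [Finset.sum_mul]
        apply Finset.sum_congr rfl
        intro j _
        ring
    _ = (w ⬝ᵥ v)^2 := by rw [dotProduct, sq]

lemma form_eq (l n : ℕ) (c : ℝ) (g : ℕ → ℝ) (w : ℕ → Fin (l+1) → ℝ)
    (v : Fin (l+1) → ℝ) :
    v ⬝ᵥ ((c • ∑ i ∈ Finset.Icc 1 n, g i • vecMulVec (w i) (w i)).mulVec v)
      = c * ∑ i ∈ Finset.Icc 1 n, g i * (w i ⬝ᵥ v)^2 := by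
  rw [Matrix.smul_mulVec, dotProduct_smul, smul_eq_mul]
  congr 1
  have lin : ∀ s : Finset ℕ,
      v ⬝ᵥ ((∑ i ∈ s, g i • vecMulVec (w i) (w i)).mulVec v)
        = ∑ i ∈ s, g i * (w i ⬝ᵥ v)^2 := by
    intro s
    induction s using Finset.induction with
    | empty => simp [Matrix.mulVec]
    | @insert j s hj ih =>
      rw [Finset.sum_insert hj, Matrix.add_mulVec, dotProduct_add, ih,
        Finset.sum_insert hj]
      congr 1
      rw [Matrix.smul_mulVec, dotProduct_smul, smul_eq_mul, quad_term]
  exact lin _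

set_option maxHeartbeats 1600000 in
lemma main_case (l : ℕ) (K : ℝ → ℝ) (Kmin Δ : ℝ) (hKmin : 0 < Kmin)
    (hK : ∀ u : ℝ, Kmin * (if |u| ≤ Δ then 1 else 0) ≤ K u)
    (D d ε : ℝ) (hD : 1 ≤ D) (hd : 0 < d) (hε : 0 < ε)
    (a : ℝ) (haΔ : -Δ ≤ a) (haΔ2 : a + d ≤ Δ)
    (haD : a + d ≤ D) (haD' : -D ≤ a - d)
    (n : ℕ) (hn : 1 ≤ n) (bb : ℝ) (hb : 0 < bb) (x : ℝ)
    (hhd : 1/((n:ℝ)*bb) ≤ d)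
    (hC4 : 1/((n:ℝ)*bb) * (Rc l D + 2*d*CLc l D) ≤ ε/2)
    (hA0 : 0 ≤ (n:ℝ)*(x + a*bb))
    (hAmn : (n:ℝ)*(x + (a+d)*bb) ≤ (n:ℝ))
    (v : Fin (l+1) → ℝ)
    (hGG : ε * Sq l v ≤ GG l a d v) :
    Kmin * ε / 2 * Sq l v ≤
      1/((n:ℝ)*bb) * ∑ i ∈ Finset.Icc 1 n,
        K (((i:ℝ)/(n:ℝ) - x)/bb) * (pp l v (((i:ℝ)/(n:ℝ) - x)/bb))^2 := by
  have hn0 : (0:ℝ) < n := by exact_mod_cast hn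
  have hnb : 0 < (n:ℝ)*bb := mul_pos hn0 hb
  have hh : 0 < 1/((n:ℝ)*bb) := by positivity
  have hr := riemann l D d hD hd a x bb n hn hb hhd hA0 haD haD' v
  set h : ℝ := 1/((n:ℝ)*bb) with hh_def
  set i0 : ℕ := Nat.floor ((n:ℝ)*(x + a*bb)) with hi0_def
  set i1 : ℕ := Nat.floor ((n:ℝ)*(x + (a+d)*bb)) with hi1_def
  have hi1n : i1 ≤ n := by
    calc i1 ≤ Nat.floor ((n:ℝ)) := Nat.floor_mono hAmn
      _ = n := Nat.floor_natCast n
  have hsub : Finset.Ioc i0 i1 ⊆ Finset.Icc 1 n := by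
    intro i hi
    rw [Finset.mem_Ioc] at hi
    rw [Finset.mem_Icc]
    omega
  have hK0 : ∀ u : ℝ, 0 ≤ K u := by
    intro u
    refine le_trans ?_ (hK u)
    apply mul_nonneg hKmin.le
    split <;> norm_num
  have hKb : ∀ i ∈ Finset.Ioc i0 i1, Kmin ≤ K (((i:ℝ)/(n:ℝ) - x)/bb) := by
    intro i hi
    rw [Finset.mem_Ioc] at hi
    obtain ⟨hia, hib⟩ := hi
    have hiA : (n:ℝ)*(x + a*bb) < (i:ℝ) := by
      have h1 : (n:ℝ)*(x + a*bb) < (i0:ℝ) + 1 := Nat.lt_floor_add_one _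
      have h2 : (i0:ℝ) + 1 ≤ (i:ℝ) := by exact_mod_cast hia
      linarith
    have hAm0 : 0 ≤ (n:ℝ)*(x + (a+d)*bb) := by nlinarith
    have hiB : (i:ℝ) ≤ (n:ℝ)*(x + (a+d)*bb) := by
      have h1 : (i:ℝ) ≤ (i1:ℝ) := by exact_mod_cast hib
      have h2 : (i1:ℝ) ≤ (n:ℝ)*(x + (a+d)*bb) := Nat.floor_le hAm0
      linarith
    have e1 : x + a*bb < (i:ℝ)/(n:ℝ) := by
      rw [lt_div_iff₀ hn0]
      nlinarith
    have e2 : a < ((i:ℝ)/(n:ℝ) - x)/bb := by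
      rw [lt_div_iff₀ hb]
      linarith
    have e3 : (i:ℝ)/(n:ℝ) ≤ x + (a+d)*bb := by
      rw [div_le_iff₀ hn0]
      nlinarith
    have e4 : ((i:ℝ)/(n:ℝ) - x)/bb ≤ a + d := by
      rw [div_le_iff₀ hb]
      nlinarith
    have habs : |((i:ℝ)/(n:ℝ) - x)/bb| ≤ Δ := abs_le.mpr ⟨by linarith, by linarith⟩
    have := hK (((i:ℝ)/(n:ℝ) - x)/bb)
    rw [if_pos habs, mul_one] at this
    exact this
  set T : ℝ := ∑ i ∈ Finset.Ioc i0 i1, (pp l v (((i:ℝ)/(n:ℝ) - x)/bb))^2 with hT_def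
  have s1 : Kmin * T ≤ ∑ i ∈ Finset.Ioc i0 i1,
      K (((i:ℝ)/(n:ℝ) - x)/bb) * (pp l v (((i:ℝ)/(n:ℝ) - x)/bb))^2 := by
    rw [hT_def, Finset.mul_sum]
    apply Finset.sum_le_sum
    intro i hi
    exact mul_le_mul_of_nonneg_right (hKb i hi) (sq_nonneg _)
  have s2 : ∑ i ∈ Finset.Ioc i0 i1,
      K (((i:ℝ)/(n:ℝ) - x)/bb) * (pp l v (((i:ℝ)/(n:ℝ) - x)/bb))^2
      ≤ ∑ i ∈ Finset.Icc 1 n,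
        K (((i:ℝ)/(n:ℝ) - x)/bb) * (pp l v (((i:ℝ)/(n:ℝ) - x)/bb))^2 :=
    Finset.sum_le_sum_of_subset_of_nonneg hsub
      (fun i _ _ => mul_nonneg (hK0 _) (sq_nonneg _))
  -- from riemann : GG - h * ((Rc + 2 d CL) * Sq) ≤ h * T
  have hTge : ε/2 * Sq l v ≤ h * T := by
    have hcc := mul_le_mul_of_nonneg_right hC4 (Sq_nonneg l v)
    nlinarith [hr, hGG]
  have hfinal : Kmin * ε / 2 * Sq l v ≤ Kmin * (h * T) := by
    nlinarith [hTge, hKmin]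
  have hmono : Kmin * (h * T) ≤ h * ∑ i ∈ Finset.Icc 1 n,
      K (((i:ℝ)/(n:ℝ) - x)/bb) * (pp l v (((i:ℝ)/(n:ℝ) - x)/bb))^2 := by
    have := mul_le_mul_of_nonneg_left (s1.trans s2) hh.le
    calc Kmin * (h * T) = h * (Kmin * T) := by ring
      _ ≤ _ := this
  linarith

end DesignEV

open DesignEV

/-- Lower bound on the smallest eigenvalue of the local polynomial design matrix
`B_{nx}`, uniform over `x ∈ [0,1]`, for large `n`, when `b_n → 0` and `n b_n → ∞`. -/
theorem design_matrix_min_eigenvalue (l : ℕ) (K : ℝ → ℝ) (Kmin Δ : ℝ)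
    (hKmin : 0 < Kmin) (hΔ : 0 < Δ)
    (hK : ∀ u : ℝ, Kmin * (if |u| ≤ Δ then 1 else 0) ≤ K u)
    (b : ℕ → ℝ) (hbpos : ∀ n, 0 < b n)
    (hb0 : Filter.Tendsto b Filter.atTop (nhds 0))
    (hnb : Filter.Tendsto (fun n : ℕ => (n : ℝ) * b n) Filter.atTop Filter.atTop) :
    ∃ lam0 > 0, ∃ n0 : ℕ, ∀ n ≥ n0, ∀ x ∈ Set.Icc (0:ℝ) 1,
      ∀ v : Fin (l + 1) → ℝ,
        lam0 * (v ⬝ᵥ v) ≤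
          v ⬝ᵥ (((1 / ((n : ℝ) * b n)) •
            ∑ i ∈ Finset.Icc 1 n,
              K (((i : ℝ) / n - x) / b n) •
                Matrix.vecMulVec
                  (fun k : Fin (l + 1) => (((i : ℝ) / n - x) / b n) ^ (k : ℕ) / (Nat.factorial k))
                  (fun k : Fin (l + 1) => (((i : ℝ) / n - x) / b n) ^ (k : ℕ) / (Nat.factorial k))
            : Matrix (Fin (l + 1)) (Fin (l + 1)) ℝ).mulVec v) := by
  have hd0 : (0:ℝ) < Δ/2 := by linarith
  obtain ⟨ε, hε, hGGall⟩ := exists_eps l (Δ/2) hd0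
  set D : ℝ := max Δ 1 with hD_def
  have hD1 : (1:ℝ) ≤ D := le_max_right _ _
  have hΔD : Δ ≤ D := le_max_left _ _
  set d : ℝ := Δ/2 with hd_def
  set C2 : ℝ := Rc l D + 2*d*CLc l D with hC2_def
  have hC2nn : 0 ≤ C2 := by
    rw [hC2_def]
    have := Rc_nonneg l D
    have := CLc_nonneg l D
    nlinarith
  refine ⟨Kmin * ε / 2, by positivity, ?_⟩
  have hev1 := hnb.eventually_ge_atTop (max (1/d) (2*(C2+1)/ε))
  have hev2 := hb0.eventually_lt_const (show (0:ℝ) < 1/(2*d) by positivity)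
  have hev3 : ∀ᶠ n : ℕ in Filter.atTop, 1 ≤ n := Filter.eventually_ge_atTop 1
  obtain ⟨n0, hn0all⟩ := Filter.eventually_atTop.mp ((hev1.and hev2).and hev3)
  refine ⟨n0, ?_⟩
  intro n hn x hx v
  obtain ⟨⟨hc1, hc2⟩, hc3⟩ := hn0all n hn
  have hbn := hbpos n
  have hnR : (0:ℝ) < n := by exact_mod_cast hc3
  have hnb0 : 0 < (n:ℝ) * b n := mul_pos hnR hbn
  have hhd : 1/((n:ℝ)*b n) ≤ d := by
    have h1 : 1/d ≤ (n:ℝ)*b n := le_trans (le_max_left _ _) hc1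
    have h2 : (1/d) * d ≤ ((n:ℝ)*b n) * d := mul_le_mul_of_nonneg_right h1 (by linarith)
    rw [one_div_mul_cancel (ne_of_gt hd0)] at h2
    rw [div_le_iff₀ hnb0]
    nlinarith
  have hC4 : 1/((n:ℝ)*b n) * C2 ≤ ε/2 := by
    have h1 : 2*(C2+1)/ε ≤ (n:ℝ)*b n := le_trans (le_max_right _ _) hc1
    have h2 : 1/((n:ℝ)*b n) ≤ ε/(2*(C2+1)) := by
      have hpos : 0 < 2*(C2+1)/ε := by positivity
      have h3 := one_div_le_one_div_of_le hpos h1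
      rwa [one_div_div] at h3
    calc 1/((n:ℝ)*b n) * C2 ≤ ε/(2*(C2+1)) * C2 := mul_le_mul_of_nonneg_right h2 hC2nn
      _ ≤ ε/2 := by
          rw [div_mul_eq_mul_div, div_le_div_iff₀ (by positivity) two_pos]
          nlinarith
  have hdb : d * b n ≤ 1/2 := by
    have h1 : d * b n < d * (1/(2*d)) := mul_lt_mul_of_pos_left hc2 hd0
    have h2 : d * (1/(2*d)) = 1/2 := by
      field_simp
    linarith [h2 ▸ h1]
  rw [form_eq l n (1/((n:ℝ)*b n)) (fun i : ℕ => K (((i:ℝ)/n - x)/b n))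
    (fun i : ℕ => fun k : Fin (l+1) => (((i:ℝ)/n - x)/b n) ^ (k:ℕ) / (Nat.factorial k)) v]
  have hsumeq : ∑ i ∈ Finset.Icc 1 n,
      K (((i:ℝ)/n - x)/b n) * ((fun k : Fin (l+1) => (((i:ℝ)/n - x)/b n) ^ (k:ℕ) / (Nat.factorial k)) ⬝ᵥ v)^2
      = ∑ i ∈ Finset.Icc 1 n,
        K (((i:ℝ)/n - x)/b n) * (pp l v (((i:ℝ)/n - x)/b n))^2 :=
    Finset.sum_congr rfl (fun i _ => by rw [dot_pp])
  rw [hsumeq, ← Sq_eq_dot]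
  rcases le_or_gt x (1/2) with hxh | hxh
  · -- use a = 0
    have hA0 : 0 ≤ (n:ℝ)*(x + 0*b n) := by
      have : x + 0*b n = x := by ring
      rw [this]
      exact mul_nonneg hnR.le hx.1
    have hAmn : (n:ℝ)*(x + (0+d)*b n) ≤ (n:ℝ) := by
      have hin : x + (0+d)*b n ≤ 1 := by
        have : (0+d)*b n = d * b n := by ring
        rw [this]
        linarith
      calc (n:ℝ)*(x + (0+d)*b n) ≤ (n:ℝ)*1 := mul_le_mul_of_nonneg_left hin hnR.le
        _ = (n:ℝ) := mul_one _
    have := main_case l K Kmin Δ hKmin hK D d ε hD1 hd0 hε 0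
      (by linarith) (by rw [hd_def]; linarith) (by rw [hd_def]; linarith)
      (by rw [hd_def]; linarith)
      n hc3 (b n) hbn x hhd (by rw [← hC2_def]; exact hC4) hA0 hAmn v (hGGall v).1
    exact this
  · -- use a = -d
    have hA0 : 0 ≤ (n:ℝ)*(x + (-d)*b n) := by
      apply mul_nonneg hnR.le
      nlinarith
    have hAmn : (n:ℝ)*(x + (-d+d)*b n) ≤ (n:ℝ) := by
      have hin : x + (-d+d)*b n ≤ 1 := by
        have : (-d+d)*b n = 0 := by ring
        rw [this]
        linarith [hx.2]
      calc (n:ℝ)*(x + (-d+d)*b n) ≤ (n:ℝ)*1 := mul_le_mul_of_nonneg_left hin hnR.le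
        _ = (n:ℝ) := mul_one _
    have := main_case l K Kmin Δ hKmin hK D d ε hD1 hd0 hε (-d)
      (by rw [hd_def]; linarith) (by rw [hd_def]; linarith) (by rw [hd_def]; linarith)
      (by rw [hd_def]; linarith)
      n hc3 (b n) hbn x hhd (by rw [← hC2_def]; exact hC4) hA0 hAmn v (hGGall v).2
    exact this
end
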